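/- Let T be a tree and S = (S_A, S_B, S_C) a labeling of T such that (T, S) belongs to the family 𝒯. Then γ_t2(T) = 2(n(T) − l(T) + 2)/5, where n(T) is the order of T and l(T) its number of leaves; moreover S_A is a semitotal dominating set of T of minimum cardinality. -/

import Mathlib

open SimpleGraph

/-- A dominating set: every vertex outside `S` has a neighbor in `S`. -/
def IsDominatingSet {V : Type} (G : SimpleGraph V) (S : Set V) : Prop :=
  ∀ v ∉ S, ∃ u ∈ S, G.Adj u v

/-- A total dominating set: every vertex has a neighbor in `S`. -/
def IsTotalDominatingSet {V : Type} (G : SimpleGraph V) (S : Set V) : Prop :=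
  ∀ v : V, ∃ u ∈ S, G.Adj u v

/-- `u` is within distance two of `v`. -/
def WithinTwo {V : Type} (G : SimpleGraph V) (u v : V) : Prop :=
  G.Adj u v ∨ ∃ w, G.Adj u w ∧ G.Adj w v

/-- A semitotal dominating set: a dominating set in which every vertex is within
distance two of another vertex of the set. -/
def IsSemitotalDominatingSet {V : Type} (G : SimpleGraph V) (S : Set V) : Prop :=
  IsDominatingSet G S ∧ ∀ v ∈ S, ∃ u ∈ S, u ≠ v ∧ WithinTwo G u v

/-- The domination number `γ(G)`. -/
noncomputable def dominationNumber {V : Type} (G : SimpleGraph V) : ℕ :=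
  sInf {n | ∃ S : Set V, IsDominatingSet G S ∧ S.ncard = n}

/-- The total domination number `γ_t(G)`. -/
noncomputable def totalDominationNumber {V : Type} (G : SimpleGraph V) : ℕ :=
  sInf {n | ∃ S : Set V, IsTotalDominatingSet G S ∧ S.ncard = n}

/-- The semitotal domination number `γ_t2(G)`. -/
noncomputable def semitotalDominationNumber {V : Type} (G : SimpleGraph V) : ℕ :=
  sInf {n | ∃ S : Set V, IsSemitotalDominatingSet G S ∧ S.ncard = n}

/-- A leaf: a vertex of degree one. -/
def IsLeaf {V : Type} (G : SimpleGraph V) (v : V) : Prop :=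
  (G.neighborSet v).ncard = 1

/-- A support vertex: a vertex adjacent to a leaf. -/
def IsSupport {V : Type} (G : SimpleGraph V) (v : V) : Prop :=
  ∃ u, G.Adj v u ∧ IsLeaf G u

/-- A star: a graph isomorphic to `K_{1,m}` for some `m ≥ 1`. -/
def IsStar {V : Type} (G : SimpleGraph V) : Prop :=
  ∃ m : ℕ, 1 ≤ m ∧ Nonempty (G ≃g completeBipartiteGraph Unit (Fin m))

/-- The graph obtained from the disjoint union of `G` and `H` by adding
the single edge joining `v : V` to `w : W`. -/
def attach {V W : Type} (G : SimpleGraph V) (H : SimpleGraph W) (v : V) (w : W) :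
    SimpleGraph (V ⊕ W) where
  Adj x y :=
    match x, y with
    | Sum.inl a, Sum.inl b => G.Adj a b
    | Sum.inr a, Sum.inr b => H.Adj a b
    | Sum.inl a, Sum.inr b => a = v ∧ b = w
    | Sum.inr a, Sum.inl b => b = v ∧ a = w
  symm := by
    constructor
    rintro (a | a) (b | b) h
    · exact G.adj_symm h
    · exact ⟨h.1, h.2⟩
    · exact ⟨h.1, h.2⟩
    · exact H.adj_symm h
  loopless := by
    constructor
    rintro (a | a) h
    · exact G.irrefl h
    · exact H.irrefl h

/-- The statuses used to label the vertices of trees in the family `𝒯`. -/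
inductive Label : Type
  | A | B | C
deriving DecidableEq

/-- The labeling of the path `P₅` assigning `A` to the two support vertices,
`C` to the two leaves and `B` to the center. -/
def pathLabel : Fin 5 → Label
  | 0 => Label.C
  | 1 => Label.A
  | 2 => Label.B
  | 3 => Label.A
  | 4 => Label.C

/-- The family `𝒯` of labeled trees: it contains the labeled path `P₅`, and is closed
under operation `𝒪₁` (attach a new leaf labeled `C` to a vertex labeled `A`), operation
`𝒪₂` (attach a labeled path `P₅` to a degree-one vertex labeled `C`), and under
isomorphism of labeled graphs. -/
inductive TFamily : ∀ {V : Type}, SimpleGraph V → (V → Label) → Prop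
  | base : TFamily (SimpleGraph.pathGraph 5) pathLabel
  | op1 {V : Type} {G : SimpleGraph V} {f : V → Label} (v : V)
      (hv : f v = Label.A) (h : TFamily G f) :
      TFamily (attach G (⊥ : SimpleGraph (Fin 1)) v 0)
        (Sum.elim f (fun _ => Label.C))
  | op2 {V : Type} {G : SimpleGraph V} {f : V → Label} (v : V)
      (hv : f v = Label.C) (hdeg : (G.neighborSet v).ncard = 1) (h : TFamily G f) :
      TFamily (attach G (SimpleGraph.pathGraph 5) v 0) (Sum.elim f pathLabel)
  | iso {V W : Type} {G : SimpleGraph V} {H : SimpleGraph W} {f : V → Label}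
      (e : G ≃g H) (h : TFamily G f) : TFamily H (fun w => f (e.symm w))

/-- The subdivided star with `t` leaves: center `none`, and for each `i : Fin t`
a path `none — some (i,0) — some (i,1)`. -/
def subdividedStar (t : ℕ) : SimpleGraph (Option (Fin t × Fin 2)) :=
  SimpleGraph.fromRel (fun x y =>
    match x, y with
    | none, some p => p.2 = 0
    | some p, some q => p.1 = q.1 ∧ p.2 = 0 ∧ q.2 = 1
    | _, _ => False)

/-- The tree `Y` with three leaves, obtained from the star `K_{1,3}` with center `0`
by subdividing exactly one edge: edges `0-1`, `0-2`, `0-3`, `3-4`.  Its leaves are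
`1`, `2`, `4`; the leaf-neighbors of the center are `1` and `2`. -/
def Ytree : SimpleGraph (Fin 5) :=
  SimpleGraph.fromRel (fun x y =>
    (x = 0 ∧ y = 1) ∨ (x = 0 ∧ y = 2) ∨ (x = 0 ∧ y = 3) ∨ (x = 3 ∧ y = 4))

/-- An almost dominating set of `G` relative to `v`: dominates every vertex except
possibly `v`. -/
def IsAlmostDominatingSet {V : Type} (G : SimpleGraph V) (v : V) (S : Set V) : Prop :=
  ∀ w, w ≠ v → w ∉ S → ∃ u ∈ S, G.Adj u w

/-- The almost domination number `γ(G; v)`. -/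
noncomputable def almostDominationNumber {V : Type} (G : SimpleGraph V) (v : V) : ℕ :=
  sInf {n | ∃ S : Set V, IsAlmostDominatingSet G v S ∧ S.ncard = n}

/-- The family `𝒪` of trees: all trees obtainable from the path `P₄` by a finite
sequence of the operations `𝒪₁`–`𝒪₄` (and taking isomorphic copies). -/
inductive OFamily : ∀ {V : Type}, SimpleGraph V → Prop
  | base : OFamily (SimpleGraph.pathGraph 4)
  | op1 {V : Type} {G : SimpleGraph V} (v : V)
      (hv : ∃ S : Set V, IsSemitotalDominatingSet G S ∧
        S.ncard = semitotalDominationNumber G ∧ v ∈ S)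
      (h : OFamily G) :
      OFamily (attach G (⊥ : SimpleGraph (Fin 1)) v 0)
  | op2short {V : Type} {G : SimpleGraph V} (v : V)
      (hv : almostDominationNumber G v = dominationNumber G) (h : OFamily G) :
      OFamily (attach G (SimpleGraph.pathGraph 2) v 0)
  | op2long {V : Type} {G : SimpleGraph V} (v : V)
      (hv : almostDominationNumber G v = dominationNumber G) (h : OFamily G) :
      OFamily (attach G (SimpleGraph.pathGraph 5) v 0)
  | op3 {V : Type} {G : SimpleGraph V} (v : V) (t : ℕ) (ht : 2 ≤ t) (h : OFamily G) :
      OFamily (attach G (subdividedStar t) v none)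
  | op4 {V : Type} {G : SimpleGraph V} (v : V) (h : OFamily G) :
      OFamily (attach G Ytree v 1)
  | iso {V W : Type} {G : SimpleGraph V} {H : SimpleGraph W}
      (e : G ≃g H) (h : OFamily G) : OFamily H

namespace Aux


variable {V W : Type} {G : SimpleGraph V} {H : SimpleGraph W} {v : V} {w0 : W}

theorem withinTwo_symm {u v : V} (h : WithinTwo G u v) : WithinTwo G v u := by
  rcases h with h | ⟨w, h1, h2⟩
  · exact Or.inl h.symm
  · exact Or.inr ⟨w, h2.symm, h1.symm⟩

/-- any semitotal dominating set on a nonempty vertex type has at least 2 elements -/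
theorem two_le_ncard_sds [Finite V] [Nonempty V] {S : Set V}
    (hS : IsSemitotalDominatingSet G S) : 2 ≤ S.ncard := by
  obtain ⟨x⟩ := ‹Nonempty V›
  have hx : ∃ y, y ∈ S := by
    by_cases h : x ∈ S
    · exact ⟨x, h⟩
    · obtain ⟨u, hu, -⟩ := hS.1 x h; exact ⟨u, hu⟩
  obtain ⟨y, hy⟩ := hx
  obtain ⟨u, hu, hne, -⟩ := hS.2 y hy
  have : ({u, y} : Set V) ⊆ S := by
    rintro z (rfl | rfl) <;> assumption
  calc (2 : ℕ) = ({u, y} : Set V).ncard := (Set.ncard_pair hne).symm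
    _ ≤ S.ncard := Set.ncard_le_ncard this (Set.toFinite S)

theorem ncard_sum [Finite V] [Finite W] (S : Set (V ⊕ W)) :
    S.ncard = (Sum.inl ⁻¹' S).ncard + (Sum.inr ⁻¹' S).ncard := by
  have hdecomp : S = Sum.inl '' (Sum.inl ⁻¹' S) ∪ Sum.inr '' (Sum.inr ⁻¹' S) := by
    ext (x | x) <;> simp
  conv_lhs => rw [hdecomp]
  rw [Set.ncard_union_eq, Set.ncard_image_of_injective _ Sum.inl_injective,
    Set.ncard_image_of_injective _ Sum.inr_injective]
  · rw [Set.disjoint_iff]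
    rintro z ⟨⟨a, -, rfl⟩, ⟨b, -, h⟩⟩
    exact absurd h (by simp)

@[simp] theorem attach_adj_inl_inl {a b : V} :
    (attach G H v w0).Adj (Sum.inl a) (Sum.inl b) ↔ G.Adj a b := Iff.rfl

@[simp] theorem attach_adj_inl_inr {a : V} {b : W} :
    (attach G H v w0).Adj (Sum.inl a) (Sum.inr b) ↔ a = v ∧ b = w0 := Iff.rfl

@[simp] theorem attach_adj_inr_inl {a : W} {b : V} :
    (attach G H v w0).Adj (Sum.inr a) (Sum.inl b) ↔ b = v ∧ a = w0 := Iff.rfl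

@[simp] theorem attach_adj_inr_inr {a b : W} :
    (attach G H v w0).Adj (Sum.inr a) (Sum.inr b) ↔ H.Adj a b := Iff.rfl

theorem withinTwo_inl_inl {x y : V}
    (h : WithinTwo (attach G H v w0) (Sum.inl x) (Sum.inl y)) :
    WithinTwo G x y ∨ (x = v ∧ y = v) := by
  rcases h with h | ⟨(m | m), h1, h2⟩
  · exact Or.inl (Or.inl h)
  · exact Or.inl (Or.inr ⟨m, h1, h2⟩)
  · exact Or.inr ⟨h1.1, h2.1⟩

theorem withinTwo_inr_inl {z : W} {x : V}
    (h : WithinTwo (attach G H v w0) (Sum.inr z) (Sum.inl x)) :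
    (z = w0 ∧ (x = v ∨ G.Adj v x)) ∨ (x = v ∧ H.Adj z w0) := by
  rcases h with h | ⟨(m | m), h1, h2⟩
  · exact Or.inl ⟨h.2, Or.inl h.1⟩
  · rcases h1 with ⟨rfl, rfl⟩; exact Or.inl ⟨rfl, Or.inr h2⟩
  · rcases h2 with ⟨rfl, rfl⟩; exact Or.inr ⟨rfl, h1⟩

theorem attach_neighborSet_inl {x : V} (hx : x ≠ v) :
    (attach G H v w0).neighborSet (Sum.inl x) = Sum.inl '' G.neighborSet x := by
  ext (b | b) <;> simp [mem_neighborSet, hx]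

theorem attach_neighborSet_inl_v :
    (attach G H v w0).neighborSet (Sum.inl v) =
      insert (Sum.inr w0) (Sum.inl '' G.neighborSet v) := by
  ext (b | b) <;> simp [mem_neighborSet, eq_comm]

theorem attach_neighborSet_inr {y : W} (hy : y ≠ w0) :
    (attach G H v w0).neighborSet (Sum.inr y) = Sum.inr '' H.neighborSet y := by
  ext (b | b) <;> simp [mem_neighborSet, hy]

theorem attach_neighborSet_inr_w0 :
    (attach G H v w0).neighborSet (Sum.inr w0) =
      insert (Sum.inl v) (Sum.inr '' H.neighborSet w0) := by
  ext (b | b) <;> simp [mem_neighborSet, eq_comm]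

theorem isLeaf_attach_inl [Finite V] {x : V} (hx : x ≠ v) :
    IsLeaf (attach G H v w0) (Sum.inl x) ↔ IsLeaf G x := by
  unfold IsLeaf
  rw [attach_neighborSet_inl hx, Set.ncard_image_of_injective _ Sum.inl_injective]

theorem ncard_attach_neighborSet_inl_v [Finite V] :
    ((attach G H v w0).neighborSet (Sum.inl v)).ncard = (G.neighborSet v).ncard + 1 := by
  rw [attach_neighborSet_inl_v, Set.ncard_insert_of_notMem (by simp),
    Set.ncard_image_of_injective _ Sum.inl_injective]

theorem isLeaf_attach_inr [Finite W] {y : W} (hy : y ≠ w0) :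
    IsLeaf (attach G H v w0) (Sum.inr y) ↔ IsLeaf H y := by
  unfold IsLeaf
  rw [attach_neighborSet_inr hy, Set.ncard_image_of_injective _ Sum.inr_injective]

theorem ncard_attach_neighborSet_inr_w0 [Finite W] :
    ((attach G H v w0).neighborSet (Sum.inr w0)).ncard = (H.neighborSet w0).ncard + 1 := by
  rw [attach_neighborSet_inr_w0, Set.ncard_insert_of_notMem (by simp),
    Set.ncard_image_of_injective _ Sum.inr_injective]



theorem pg_nbr0 : (pathGraph 5).neighborSet 0 = {1} := by
  ext j; simp only [mem_neighborSet, pathGraph_adj]; fin_cases j <;> simp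
theorem pg_nbr1 : (pathGraph 5).neighborSet 1 = {0, 2} := by
  ext j; simp only [mem_neighborSet, pathGraph_adj]; fin_cases j <;> simp
theorem pg_nbr2 : (pathGraph 5).neighborSet 2 = {1, 3} := by
  ext j; simp only [mem_neighborSet, pathGraph_adj]; fin_cases j <;> simp
theorem pg_nbr3 : (pathGraph 5).neighborSet 3 = {2, 4} := by
  ext j; simp only [mem_neighborSet, pathGraph_adj]; fin_cases j <;> simp <;> decide
theorem pg_nbr4 : (pathGraph 5).neighborSet 4 = {3} := by
  ext j; simp only [mem_neighborSet, pathGraph_adj]; fin_cases j <;> simp <;> decide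

theorem pg_Aset : {i : Fin 5 | pathLabel i = Label.A} = {1, 3} := by
  ext i; fin_cases i <;> simp [pathLabel]

theorem pg_leaf0 : IsLeaf (pathGraph 5) 0 := by
  unfold IsLeaf; rw [pg_nbr0]; exact Set.ncard_singleton _
theorem pg_leaf4 : IsLeaf (pathGraph 5) 4 := by
  unfold IsLeaf; rw [pg_nbr4]; exact Set.ncard_singleton _
theorem pg_nleaf1 : ¬ IsLeaf (pathGraph 5) 1 := by
  unfold IsLeaf; rw [pg_nbr1, Set.ncard_pair (by decide)]; decide
theorem pg_nleaf2 : ¬ IsLeaf (pathGraph 5) 2 := by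
  unfold IsLeaf; rw [pg_nbr2, Set.ncard_pair (by decide)]; decide
theorem pg_nleaf3 : ¬ IsLeaf (pathGraph 5) 3 := by
  unfold IsLeaf; rw [pg_nbr3, Set.ncard_pair (by decide)]; decide

theorem pg_leafset : {i : Fin 5 | IsLeaf (pathGraph 5) i} = {0, 4} := by
  ext i
  rw [Set.mem_setOf_eq]
  fin_cases i
  · exact iff_of_true pg_leaf0 (by decide)
  · exact iff_of_false pg_nleaf1 (by decide)
  · exact iff_of_false pg_nleaf2 (by decide)
  · exact iff_of_false pg_nleaf3 (by decide)
  · exact iff_of_true pg_leaf4 (by decide)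


theorem withinTwo_inl_inr {x : V} {z : W}
    (h : WithinTwo (attach G H v w0) (Sum.inl x) (Sum.inr z)) :
    (z = w0 ∧ (x = v ∨ G.Adj x v)) ∨ (x = v ∧ H.Adj w0 z) := by
  rcases h with h | ⟨(m | m), h1, h2⟩
  · exact Or.inl ⟨h.2, Or.inl h.1⟩
  · rcases h2 with ⟨rfl, rfl⟩; exact Or.inl ⟨rfl, Or.inr h1⟩
  · rcases h1 with ⟨rfl, rfl⟩; exact Or.inr ⟨rfl, h2⟩

theorem withinTwo_inr_inr {y z : W}
    (h : WithinTwo (attach G H v w0) (Sum.inr y) (Sum.inr z)) :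
    WithinTwo H y z ∨ (y = w0 ∧ z = w0) := by
  rcases h with h | ⟨(m | m), h1, h2⟩
  · exact Or.inl (Or.inl h)
  · exact Or.inr ⟨h1.2, h2.2⟩
  · exact Or.inl (Or.inr ⟨m, h1, h2⟩)

theorem pg_withinTwo {i j : Fin 5} (h : WithinTwo (pathGraph 5) i j) :
    i = j ∨ i.val = j.val + 1 ∨ i.val + 1 = j.val ∨ i.val = j.val + 2 ∨ i.val + 2 = j.val := by
  have him : i = j ∨ i.val = j.val + 1 ∨ i.val + 1 = j.val ∨ i.val = j.val + 2 ∨ i.val + 2 = j.val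
      ↔ i.val = j.val ∨ i.val = j.val + 1 ∨ i.val + 1 = j.val ∨ i.val = j.val + 2 ∨ i.val + 2 = j.val := by
    constructor
    · rintro (rfl | h) ; exact Or.inl rfl; exact Or.inr h
    · rintro (h | h); exact Or.inl (Fin.ext h); exact Or.inr h
  rw [him]
  rcases h with h | ⟨w, h1, h2⟩
  · rw [pathGraph_adj] at h; omega
  · rw [pathGraph_adj] at h1 h2
    rcases h1 with h1 | h1 <;> rcases h2 with h2 | h2 <;> omega

theorem prop5 (P : Fin 5 → Prop) (d4 : P 3 ∨ P 4)
    (p3 : P 3 → P 1 ∨ P 2 ∨ P 4) (p4 : P 4 → P 2 ∨ P 3) :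
    (∃ i j k : Fin 5, i ≠ j ∧ i ≠ k ∧ j ≠ k ∧ P i ∧ P j ∧ P k) ∨
      (¬ P 0 ∧ ∃ i j : Fin 5, i ≠ j ∧ P i ∧ P j) := by
  by_cases h0 : P 0
  · left
    rcases d4 with h3 | h4
    · rcases p3 h3 with h | h | h
      · exact ⟨0, 1, 3, by decide, by decide, by decide, h0, h, h3⟩
      · exact ⟨0, 2, 3, by decide, by decide, by decide, h0, h, h3⟩
      · exact ⟨0, 3, 4, by decide, by decide, by decide, h0, h3, h⟩
    · rcases p4 h4 with h | h
      · exact ⟨0, 2, 4, by decide, by decide, by decide, h0, h, h4⟩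
      · exact ⟨0, 3, 4, by decide, by decide, by decide, h0, h, h4⟩
  · right
    refine ⟨h0, ?_⟩
    rcases d4 with h3 | h4
    · rcases p3 h3 with h | h | h
      · exact ⟨1, 3, by decide, h, h3⟩
      · exact ⟨2, 3, by decide, h, h3⟩
      · exact ⟨3, 4, by decide, h3, h⟩
    · rcases p4 h4 with h | h
      · exact ⟨2, 4, by decide, h, h4⟩
      · exact ⟨3, 4, by decide, h, h4⟩

end Aux

structure Good {V : Type} (G : SimpleGraph V) (f : V → Label) : Prop where
  fin : Finite V
  hA : ∀ v, f v = Label.A → ∃ b, G.Adj v b ∧ f b = Label.B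
  hAC : ∀ v, f v = Label.A → ∃ c, G.Adj v c ∧ f c = Label.C
  hB : ∀ v, f v = Label.B →
    ∃ a₁ a₂, a₁ ≠ a₂ ∧ G.Adj v a₁ ∧ G.Adj v a₂ ∧ f a₁ = Label.A ∧ f a₂ = Label.A
  hC : ∀ v, f v = Label.C → ∃ a, G.Adj v a ∧ f a = Label.A
  count : 5 * {v | f v = Label.A}.ncard + 2 * {v | IsLeaf G v}.ncard = 2 * Nat.card V + 4
  lower : ∀ S : Set V, IsSemitotalDominatingSet G S → {v | f v = Label.A}.ncard ≤ S.ncard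

namespace Aux

theorem good_base : Good (pathGraph 5) pathLabel where
  fin := inferInstance
  hA := by
    intro i hi
    fin_cases i
    · exact absurd hi (by decide)
    · exact ⟨2, by rw [pathGraph_adj]; decide, by decide⟩
    · exact absurd hi (by decide)
    · exact ⟨2, by rw [pathGraph_adj]; decide, by decide⟩
    · exact absurd hi (by decide)
  hAC := by
    intro i hi
    fin_cases i
    · exact absurd hi (by decide)
    · exact ⟨0, by rw [pathGraph_adj]; decide, by decide⟩
    · exact absurd hi (by decide)
    · exact ⟨4, by rw [pathGraph_adj]; decide, by decide⟩
    · exact absurd hi (by decide)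
  hB := by
    intro i hi
    fin_cases i
    · exact absurd hi (by decide)
    · exact absurd hi (by decide)
    · exact ⟨1, 3, by decide, by rw [pathGraph_adj]; decide, by rw [pathGraph_adj]; decide,
        by decide, by decide⟩
    · exact absurd hi (by decide)
    · exact absurd hi (by decide)
  hC := by
    intro i hi
    fin_cases i
    · exact ⟨1, by rw [pathGraph_adj]; decide, by decide⟩
    · exact absurd hi (by decide)
    · exact absurd hi (by decide)
    · exact absurd hi (by decide)
    · exact ⟨3, by rw [pathGraph_adj]; decide, by decide⟩
  count := by
    rw [pg_Aset, pg_leafset, Set.ncard_pair (by decide), Set.ncard_pair (by decide),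
      Nat.card_eq_fintype_card, Fintype.card_fin]
  lower := by
    intro S hS
    rw [pg_Aset, Set.ncard_pair (by decide)]
    exact two_le_ncard_sds hS

theorem withinTwo_inl_inl_ne {x y : V} (hne : y ≠ x)
    (h : WithinTwo (attach G H v w0) (Sum.inl y) (Sum.inl x)) : WithinTwo G y x :=
  (withinTwo_inl_inl h).resolve_right (fun h' => hne (h'.1.trans h'.2.symm))

theorem good_op1 {V : Type} {G : SimpleGraph V} {f : V → Label} (v : V)
    (hv : f v = Label.A) (hG : Good G f) :
    Good (attach G (⊥ : SimpleGraph (Fin 1)) v 0) (Sum.elim f fun _ => Label.C) := by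
  haveI : Finite V := hG.fin
  obtain ⟨b, hvb, hbB⟩ := hG.hA v hv
  obtain ⟨c, hvc, hcC⟩ := hG.hAC v hv
  have hbc : b ≠ c := by rintro rfl; rw [hbB] at hcC; exact Label.noConfusion hcC
  have hvdeg : 2 ≤ (G.neighborSet v).ncard := by
    have hsub : ({b, c} : Set V) ⊆ G.neighborSet v := by
      rintro z (rfl | rfl) <;> assumption
    calc (2:ℕ) = ({b, c} : Set V).ncard := (Set.ncard_pair hbc).symm
      _ ≤ _ := Set.ncard_le_ncard hsub (Set.toFinite _)
  have hAset : {w : V ⊕ Fin 1 | Sum.elim f (fun _ => Label.C) w = Label.A}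
      = Sum.inl '' {x | f x = Label.A} := by
    ext (x | x) <;> simp
  have hAcard : {w : V ⊕ Fin 1 | Sum.elim f (fun _ => Label.C) w = Label.A}.ncard
      = {x | f x = Label.A}.ncard := by
    rw [hAset, Set.ncard_image_of_injective _ Sum.inl_injective]
  refine ⟨?_, ?_, ?_, ?_, ?_, ?_, ?_⟩
  · infer_instance
  · rintro (x | x) hx
    · obtain ⟨b', h1, h2⟩ := hG.hA x hx
      exact ⟨Sum.inl b', h1, h2⟩
    · exact absurd hx (by simp)
  · rintro (x | x) hx
    · obtain ⟨c', h1, h2⟩ := hG.hAC x hx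
      exact ⟨Sum.inl c', h1, h2⟩
    · exact absurd hx (by simp)
  · rintro (x | x) hx
    · obtain ⟨a₁, a₂, h0, h1, h2, h3, h4⟩ := hG.hB x hx
      exact ⟨Sum.inl a₁, Sum.inl a₂, by simpa using h0, h1, h2, h3, h4⟩
    · exact absurd hx (by simp)
  · rintro (x | x) hx
    · obtain ⟨a', h1, h2⟩ := hG.hC x hx
      exact ⟨Sum.inl a', h1, h2⟩
    · exact ⟨Sum.inl v, ⟨rfl, Subsingleton.elim x 0⟩, hv⟩
  · -- count
    have hL : {w : V ⊕ Fin 1 | IsLeaf (attach G (⊥ : SimpleGraph (Fin 1)) v 0) w}.ncard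
        = {x | IsLeaf G x}.ncard + 1 := by
      rw [ncard_sum]
      congr 1
      · congr 1
        ext x
        simp only [Set.mem_preimage, Set.mem_setOf_eq]
        by_cases hxv : x = v
        · subst hxv
          constructor
          · intro h
            exact absurd h (by unfold IsLeaf; rw [ncard_attach_neighborSet_inl_v]; omega)
          · intro h
            exact absurd h (by unfold IsLeaf; omega)
        · exact isLeaf_attach_inl hxv
      · have : Sum.inr ⁻¹' {w : V ⊕ Fin 1 | IsLeaf (attach G (⊥ : SimpleGraph (Fin 1)) v 0) w}
            = {(0 : Fin 1)} := by
          ext y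
          have hy : y = 0 := Subsingleton.elim y 0
          subst hy
          simp only [Set.mem_preimage, Set.mem_setOf_eq, Set.mem_singleton_iff]
          constructor
          · intro _; trivial
          · intro _
            unfold IsLeaf
            rw [ncard_attach_neighborSet_inr_w0]
            simp [SimpleGraph.neighborSet]
        rw [this, Set.ncard_singleton]
    rw [hAcard, hL, Nat.card_sum]
    have := hG.count
    have h1 : Nat.card (Fin 1) = 1 := by simp
    omega
  · -- lower
    intro S' hS'
    rw [hAcard]
    set R : Set V := Sum.inl ⁻¹' S' with hR
    have hcard : S'.ncard = R.ncard + (Sum.inr ⁻¹' S').ncard := ncard_sum S'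
    by_cases hu : Sum.inr (0 : Fin 1) ∈ S'
    · -- the new leaf is in S'
      have hQ : (Sum.inr ⁻¹' S' : Set (Fin 1)) = {0} := by
        ext y
        have hy : y = 0 := Subsingleton.elim y 0
        subst hy
        simpa using hu
      have hcard' : S'.ncard = R.ncard + 1 := by rw [hcard, hQ, Set.ncard_singleton]
      by_cases hvS : v ∈ R
      · -- v ∈ S' : use R ∪ {b}
        have hSDS : IsSemitotalDominatingSet G (insert b R) := by
          constructor
          · intro x hx
            have hx' : Sum.inl x ∉ S' := fun h => hx (Set.mem_insert_of_mem _ h)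
            obtain ⟨w, hwS, hadj⟩ := hS'.1 (Sum.inl x) hx'
            rcases w with y | y
            · exact ⟨y, Set.mem_insert_of_mem _ hwS, hadj⟩
            · refine absurd ?_ hx
              have hxv : x = v := hadj.1
              rw [hxv]
              exact Set.mem_insert_of_mem _ hvS
          · intro x hxS
            rcases Set.mem_insert_iff.1 hxS with rfl | hxR
            · exact ⟨v, Set.mem_insert_of_mem _ hvS, hvb.ne, Or.inl hvb⟩
            · obtain ⟨w, hwS, hwne, hwt⟩ := hS'.2 (Sum.inl x) hxR
              rcases w with y | y
              · have hyx : y ≠ x := fun h => hwne (by rw [h])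
                exact ⟨y, Set.mem_insert_of_mem _ hwS, hyx, withinTwo_inl_inl_ne hyx hwt⟩
              · rcases withinTwo_inr_inl hwt with ⟨-, hx2⟩ | ⟨-, hfalse⟩
                · rcases hx2 with rfl | hadj
                  · exact ⟨b, Set.mem_insert _ _, hvb.ne', Or.inl hvb.symm⟩
                  · exact ⟨v, Set.mem_insert_of_mem _ hvS, hadj.ne, Or.inl hadj⟩
                · exact absurd hfalse (by simp)
        calc {x | f x = Label.A}.ncard ≤ (insert b R).ncard := hG.lower _ hSDS
          _ ≤ R.ncard + 1 := Set.ncard_insert_le _ _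
          _ = S'.ncard := hcard'.symm
      · -- v ∉ S' : use R ∪ {v}
        have hSDS : IsSemitotalDominatingSet G (insert v R) := by
          constructor
          · intro x hx
            have hx' : Sum.inl x ∉ S' := fun h => hx (Set.mem_insert_of_mem _ h)
            obtain ⟨w, hwS, hadj⟩ := hS'.1 (Sum.inl x) hx'
            rcases w with y | y
            · exact ⟨y, Set.mem_insert_of_mem _ hwS, hadj⟩
            · refine absurd ?_ hx
              have hxv : x = v := hadj.1
              rw [hxv]
              exact Set.mem_insert _ _
          · intro x hxS
            rcases Set.mem_insert_iff.1 hxS with rfl | hxR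
            · -- x = v : partner of inr 0
              obtain ⟨w, hwS, hwne, hwt⟩ := hS'.2 (Sum.inr 0) hu
              rcases w with y | y
              · rcases withinTwo_inl_inr hwt with ⟨-, hy2⟩ | ⟨-, hfalse⟩
                · rcases hy2 with rfl | hadj
                  · exact absurd hwS hvS
                  · exact ⟨y, Set.mem_insert_of_mem _ hwS, hadj.ne, Or.inl hadj⟩
                · exact absurd hfalse (by simp)
              · exact absurd (congrArg _ (Subsingleton.elim y 0)) hwne
            · obtain ⟨w, hwS, hwne, hwt⟩ := hS'.2 (Sum.inl x) hxR
              rcases w with y | y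
              · have hyx : y ≠ x := fun h => hwne (by rw [h])
                exact ⟨y, Set.mem_insert_of_mem _ hwS, hyx, withinTwo_inl_inl_ne hyx hwt⟩
              · rcases withinTwo_inr_inl hwt with ⟨-, hx2⟩ | ⟨-, hfalse⟩
                · rcases hx2 with rfl | hadj
                  · exact absurd hxR hvS
                  · exact ⟨v, Set.mem_insert _ _, hadj.ne, Or.inl hadj⟩
                · exact absurd hfalse (by simp)
        calc {x | f x = Label.A}.ncard ≤ (insert v R).ncard := hG.lower _ hSDS
          _ ≤ R.ncard + 1 := Set.ncard_insert_le _ _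
          _ = S'.ncard := hcard'.symm
    · -- new leaf not in S'
      have hQ : (Sum.inr ⁻¹' S' : Set (Fin 1)) = ∅ := by
        ext y
        have hy : y = 0 := Subsingleton.elim y 0
        subst hy
        simpa using hu
      have hcard' : S'.ncard = R.ncard := by rw [hcard, hQ]; simp
      have hSDS : IsSemitotalDominatingSet G R := by
        constructor
        · intro x hx
          obtain ⟨w, hwS, hadj⟩ := hS'.1 (Sum.inl x) hx
          rcases w with y | y
          · exact ⟨y, hwS, hadj⟩
          · exact absurd ((show y = 0 from hadj.2) ▸ hwS) hu
        · intro x hxR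
          obtain ⟨w, hwS, hwne, hwt⟩ := hS'.2 (Sum.inl x) hxR
          rcases w with y | y
          · have hyx : y ≠ x := fun h => hwne (by rw [h])
            exact ⟨y, hwS, hyx, withinTwo_inl_inl_ne hyx hwt⟩
          · have hy : Sum.inr y = (Sum.inr (0:Fin 1) : V ⊕ Fin 1) :=
              congrArg _ (Subsingleton.elim y 0)
            exact absurd (hy ▸ hwS) hu
      calc {x | f x = Label.A}.ncard ≤ R.ncard := hG.lower _ hSDS
        _ = S'.ncard := hcard'.symm

theorem ncard_preimage_equiv {α β : Type} (e : α ≃ β) (s : Set β) :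
    (⇑e ⁻¹' s).ncard = s.ncard := by
  have h : ⇑e ⁻¹' s = ⇑e.symm '' s := by
    ext x
    constructor
    · intro hx
      exact ⟨e x, hx, e.symm_apply_apply x⟩
    · rintro ⟨y, hy, rfl⟩
      simpa [e.apply_symm_apply] using hy
  rw [h, Set.ncard_image_of_injective _ e.symm.injective]

theorem withinTwo_map {V W : Type} {G : SimpleGraph V} {H : SimpleGraph W} (e : G ≃g H)
    {u v : W} (h : WithinTwo H u v) : WithinTwo G (e.symm u) (e.symm v) := by
  rcases h with h | ⟨w, h1, h2⟩
  · exact Or.inl (e.symm.map_rel_iff.2 h)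
  · exact Or.inr ⟨e.symm w, e.symm.map_rel_iff.2 h1, e.symm.map_rel_iff.2 h2⟩

theorem good_iso {V W : Type} {G : SimpleGraph V} {H : SimpleGraph W} {f : V → Label}
    (e : G ≃g H) (hG : Good G f) : Good H (fun w => f (e.symm w)) := by
  haveI : Finite V := hG.fin
  haveI : Finite W := Finite.of_equiv V e.toEquiv
  have hadj : ∀ a b : V, G.Adj a b → H.Adj (e a) (e b) := fun a b h => e.map_rel_iff.2 h
  have hAcard : {w : W | f (e.symm w) = Label.A}.ncard = {v | f v = Label.A}.ncard := by
    have : {w : W | f (e.symm w) = Label.A} = ⇑e.toEquiv.symm ⁻¹' {v | f v = Label.A} := rfl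
    rw [this, ncard_preimage_equiv e.toEquiv.symm]
  refine ⟨inferInstance, ?_, ?_, ?_, ?_, ?_, ?_⟩
  · intro w hw
    obtain ⟨b, hb, hbl⟩ := hG.hA _ hw
    refine ⟨e b, ?_, by rwa [e.symm_apply_apply]⟩
    have := hadj _ _ hb
    rwa [e.apply_symm_apply] at this
  · intro w hw
    obtain ⟨b, hb, hbl⟩ := hG.hAC _ hw
    refine ⟨e b, ?_, by rwa [e.symm_apply_apply]⟩
    have := hadj _ _ hb
    rwa [e.apply_symm_apply] at this
  · intro w hw
    obtain ⟨a₁, a₂, h0, h1, h2, h3, h4⟩ := hG.hB _ hw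
    refine ⟨e a₁, e a₂, fun hc => h0 (e.injective hc), ?_, ?_,
      by rwa [e.symm_apply_apply], by rwa [e.symm_apply_apply]⟩
    · have := hadj _ _ h1; rwa [e.apply_symm_apply] at this
    · have := hadj _ _ h2; rwa [e.apply_symm_apply] at this
  · intro w hw
    obtain ⟨b, hb, hbl⟩ := hG.hC _ hw
    refine ⟨e b, ?_, by rwa [e.symm_apply_apply]⟩
    have := hadj _ _ hb
    rwa [e.apply_symm_apply] at this
  · have hLset : {w : W | IsLeaf H w} = ⇑e.toEquiv.symm ⁻¹' {v | IsLeaf G v} := by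
      ext w
      simp only [Set.mem_setOf_eq, Set.mem_preimage]
      unfold IsLeaf
      have hn : H.neighborSet w = ⇑e.toEquiv.symm ⁻¹' G.neighborSet (e.symm w) := by
        ext u
        constructor
        · intro h
          exact e.symm.map_rel_iff.2 h
        · intro h
          have h' : G.Adj (e.symm w) (e.symm u) := h
          exact e.symm.map_rel_iff.1 h'
      rw [hn, ncard_preimage_equiv]
      exact Iff.rfl
    rw [hAcard, hLset, ncard_preimage_equiv e.toEquiv.symm,
      Nat.card_congr e.toEquiv.symm]
    exact hG.count
  · intro S hS
    rw [hAcard]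
    have hSDS : IsSemitotalDominatingSet G (⇑e.toEquiv ⁻¹' S) := by
      constructor
      · intro x hx
        obtain ⟨u, hu, huadj⟩ := hS.1 (e x) hx
        refine ⟨e.symm u, by simpa [Set.mem_preimage, e.apply_symm_apply] using hu, ?_⟩
        have := e.symm.map_rel_iff.2 huadj
        rwa [e.symm_apply_apply] at this
      · intro x hx
        obtain ⟨u, hu, hune, hut⟩ := hS.2 (e x) hx
        refine ⟨e.symm u, by simpa [Set.mem_preimage, e.apply_symm_apply] using hu, ?_, ?_⟩
        · intro hc
          apply hune
          rw [← e.apply_symm_apply u, hc]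
        · have := withinTwo_map e hut
          rwa [e.symm_apply_apply] at this
    calc {v | f v = Label.A}.ncard ≤ (⇑e.toEquiv ⁻¹' S).ncard := hG.lower _ hSDS
      _ = S.ncard := ncard_preimage_equiv _ _

theorem good_op2 {V : Type} {G : SimpleGraph V} {f : V → Label} (v : V)
    (hv : f v = Label.C) (hdeg : (G.neighborSet v).ncard = 1) (hG : Good G f) :
    Good (attach G (SimpleGraph.pathGraph 5) v 0) (Sum.elim f pathLabel) := by
  haveI : Finite V := hG.fin
  obtain ⟨a, hva, haA⟩ := hG.hC v hv
  have hNv : G.neighborSet v = {a} := by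
    obtain ⟨x, hx⟩ := Set.ncard_eq_one.1 hdeg
    have hax : a = x := by
      have h' : a ∈ G.neighborSet v := hva
      rw [hx] at h'
      simpa using h'
    rw [hx, ← hax]
  have hadj_va : ∀ x, G.Adj v x → x = a := by
    intro x hx
    have : x ∈ G.neighborSet v := hx
    rw [hNv] at this
    simpa using this
  have hav_ne : a ≠ v := hva.ne'
  obtain ⟨b, hab, hbB⟩ := hG.hA a haA
  have hbv : b ≠ v := by
    intro h; rw [h, hv] at hbB; exact Label.noConfusion hbB
  have hAcard : {w : V ⊕ Fin 5 | Sum.elim f pathLabel w = Label.A}.ncard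
      = {x | f x = Label.A}.ncard + 2 := by
    rw [ncard_sum]
    congr 1
    have h1 : (Sum.inr ⁻¹' {w : V ⊕ Fin 5 | Sum.elim f pathLabel w = Label.A})
        = {i : Fin 5 | pathLabel i = Label.A} := rfl
    rw [h1, pg_Aset, Set.ncard_pair (by decide)]
  refine ⟨?_, ?_, ?_, ?_, ?_, ?_, ?_⟩
  · infer_instance
  · rintro (x | i) hx
    · obtain ⟨b', h1, h2⟩ := hG.hA x hx
      exact ⟨Sum.inl b', h1, h2⟩
    · fin_cases i
      · exact Label.noConfusion hx
      · exact ⟨Sum.inr 2, show (pathGraph 5).Adj 1 2 by rw [pathGraph_adj]; decide, rfl⟩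
      · exact Label.noConfusion hx
      · exact ⟨Sum.inr 2, show (pathGraph 5).Adj 3 2 by rw [pathGraph_adj]; decide, rfl⟩
      · exact Label.noConfusion hx
  · rintro (x | i) hx
    · obtain ⟨c', h1, h2⟩ := hG.hAC x hx
      exact ⟨Sum.inl c', h1, h2⟩
    · fin_cases i
      · exact Label.noConfusion hx
      · exact ⟨Sum.inr 0, show (pathGraph 5).Adj 1 0 by rw [pathGraph_adj]; decide, rfl⟩
      · exact Label.noConfusion hx
      · exact ⟨Sum.inr 4, show (pathGraph 5).Adj 3 4 by rw [pathGraph_adj]; decide, rfl⟩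
      · exact Label.noConfusion hx
  · rintro (x | i) hx
    · obtain ⟨a₁, a₂, h0, h1, h2, h3, h4⟩ := hG.hB x hx
      exact ⟨Sum.inl a₁, Sum.inl a₂, by simpa using h0, h1, h2, h3, h4⟩
    · fin_cases i
      · exact Label.noConfusion hx
      · exact Label.noConfusion hx
      · exact ⟨Sum.inr 1, Sum.inr 3, fun h => absurd (Sum.inr.inj h) (by decide),
          show (pathGraph 5).Adj 2 1 by rw [pathGraph_adj]; decide,
          show (pathGraph 5).Adj 2 3 by rw [pathGraph_adj]; decide, rfl, rfl⟩
      · exact Label.noConfusion hx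
      · exact Label.noConfusion hx
  · rintro (x | i) hx
    · obtain ⟨a', h1, h2⟩ := hG.hC x hx
      exact ⟨Sum.inl a', h1, h2⟩
    · fin_cases i
      · exact ⟨Sum.inr 1, show (pathGraph 5).Adj 0 1 by rw [pathGraph_adj]; decide, rfl⟩
      · exact Label.noConfusion hx
      · exact Label.noConfusion hx
      · exact Label.noConfusion hx
      · exact ⟨Sum.inr 3, show (pathGraph 5).Adj 4 3 by rw [pathGraph_adj]; decide, rfl⟩
  · -- count
    have hL : {w : V ⊕ Fin 5 | IsLeaf (attach G (pathGraph 5) v 0) w}.ncard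
        = {x | IsLeaf G x}.ncard := by
      rw [ncard_sum]
      have h1 : (Sum.inl ⁻¹' {w : V ⊕ Fin 5 | IsLeaf (attach G (pathGraph 5) v 0) w})
          = {x | IsLeaf G x} \ {v} := by
        ext x
        simp only [Set.mem_preimage, Set.mem_setOf_eq, Set.mem_diff, Set.mem_singleton_iff]
        by_cases hxv : x = v
        · subst hxv
          constructor
          · intro h
            exact absurd h (by
              unfold IsLeaf
              rw [ncard_attach_neighborSet_inl_v, hdeg]
              omega)
          · rintro ⟨-, h⟩; exact absurd rfl h
        · rw [isLeaf_attach_inl hxv]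
          exact ⟨fun h => ⟨h, hxv⟩, fun h => h.1⟩
      have h2 : (Sum.inr ⁻¹' {w : V ⊕ Fin 5 | IsLeaf (attach G (pathGraph 5) v 0) w})
          = {(4 : Fin 5)} := by
        ext i
        simp only [Set.mem_preimage, Set.mem_setOf_eq, Set.mem_singleton_iff]
        by_cases hi0 : i = 0
        · subst hi0
          constructor
          · intro h
            exact absurd h (by
              unfold IsLeaf
              rw [ncard_attach_neighborSet_inr_w0, pg_nbr0, Set.ncard_singleton]
              omega)
          · intro h; exact absurd h (by decide)
        · rw [isLeaf_attach_inr hi0]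
          constructor
          · intro h
            have h' : i ∈ ({0, 4} : Set (Fin 5)) := by
              rw [← pg_leafset]; exact h
            rcases Set.mem_insert_iff.1 h' with h'' | h''
            · exact absurd h'' hi0
            · exact h''
          · rintro rfl; exact pg_leaf4
      rw [h1, h2, Set.ncard_singleton]
      have hvmem : v ∈ {x | IsLeaf G x} := hdeg
      rw [Set.ncard_diff_singleton_add_one hvmem]
    rw [hAcard, hL, Nat.card_sum]
    have := hG.count
    have h5 : Nat.card (Fin 5) = 5 := by simp
    omega
  · -- lower bound
    intro S' hS'
    rw [hAcard]
    set R : Set V := Sum.inl ⁻¹' S' with hR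
    set Q : Set (Fin 5) := Sum.inr ⁻¹' S' with hQdef
    have hcardS : S'.ncard = R.ncard + Q.ncard := ncard_sum S'
    -- dominator extraction for path vertices
    have hdomP : ∀ i : Fin 5, i ≠ 0 → Sum.inr i ∉ S' →
        ∃ j, (pathGraph 5).Adj j i ∧ Sum.inr j ∈ S' := by
      intro i hi hmem
      obtain ⟨w, hwS, hadj⟩ := hS'.1 (Sum.inr i) hmem
      rcases w with y | j
      · exact absurd hadj.2 hi
      · exact ⟨j, hadj, hwS⟩
    have c1 : Sum.inr (0:Fin 5) ∈ S' ∨ Sum.inr (1:Fin 5) ∈ S' ∨ Sum.inr (2:Fin 5) ∈ S' := by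
      by_cases h1 : Sum.inr (1:Fin 5) ∈ S'
      · exact Or.inr (Or.inl h1)
      · obtain ⟨j, hadj, hj⟩ := hdomP 1 (by decide) h1
        rw [pathGraph_adj] at hadj
        fin_cases j
        · exact Or.inl hj
        · exact absurd hadj (by decide)
        · exact Or.inr (Or.inr hj)
        · exact absurd hadj (by decide)
        · exact absurd hadj (by decide)
    have c2 : Sum.inr (1:Fin 5) ∈ S' ∨ Sum.inr (2:Fin 5) ∈ S' ∨ Sum.inr (3:Fin 5) ∈ S' := by
      by_cases h1 : Sum.inr (2:Fin 5) ∈ S'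
      · exact Or.inr (Or.inl h1)
      · obtain ⟨j, hadj, hj⟩ := hdomP 2 (by decide) h1
        rw [pathGraph_adj] at hadj
        fin_cases j
        · exact absurd hadj (by decide)
        · exact Or.inl hj
        · exact absurd hadj (by decide)
        · exact Or.inr (Or.inr hj)
        · exact absurd hadj (by decide)
    have c4 : Sum.inr (3:Fin 5) ∈ S' ∨ Sum.inr (4:Fin 5) ∈ S' := by
      by_cases h1 : Sum.inr (4:Fin 5) ∈ S'
      · exact Or.inr h1
      · obtain ⟨j, hadj, hj⟩ := hdomP 4 (by decide) h1
        rw [pathGraph_adj] at hadj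
        fin_cases j
        · exact absurd hadj (by decide)
        · exact absurd hadj (by decide)
        · exact absurd hadj (by decide)
        · exact Or.inl hj
        · exact absurd hadj (by decide)
    have c3p : Sum.inr (3:Fin 5) ∈ S' →
        Sum.inr (1:Fin 5) ∈ S' ∨ Sum.inr (2:Fin 5) ∈ S' ∨ Sum.inr (4:Fin 5) ∈ S' := by
      intro h3
      obtain ⟨w, hwS, hwne, hwt⟩ := hS'.2 (Sum.inr 3) h3
      rcases w with y | j
      · rcases withinTwo_inl_inr hwt with ⟨h30, -⟩ | ⟨-, hadj⟩
        · exact absurd h30 (by decide)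
        · rw [pathGraph_adj] at hadj
          exact absurd hadj (by decide)
      · rcases withinTwo_inr_inr hwt with hwt' | ⟨-, h30⟩
        · rcases pg_withinTwo hwt' with rfl | hvals
          · exact absurd rfl hwne
          · fin_cases j
            · exact absurd hvals (by decide)
            · exact Or.inl hwS
            · exact Or.inr (Or.inl hwS)
            · exact absurd hvals (by decide)
            · exact Or.inr (Or.inr hwS)
        · exact absurd h30 (by decide)
    have c4p : Sum.inr (4:Fin 5) ∈ S' →
        Sum.inr (2:Fin 5) ∈ S' ∨ Sum.inr (3:Fin 5) ∈ S' := by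
      intro h4
      obtain ⟨w, hwS, hwne, hwt⟩ := hS'.2 (Sum.inr 4) h4
      rcases w with y | j
      · rcases withinTwo_inl_inr hwt with ⟨h40, -⟩ | ⟨-, hadj⟩
        · exact absurd h40 (by decide)
        · rw [pathGraph_adj] at hadj
          exact absurd hadj (by decide)
      · rcases withinTwo_inr_inr hwt with hwt' | ⟨-, h40⟩
        · rcases pg_withinTwo hwt' with rfl | hvals
          · exact absurd rfl hwne
          · fin_cases j
            · exact absurd hvals (by decide)
            · exact absurd hvals (by decide)
            · exact Or.inl hwS
            · exact Or.inr hwS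
            · exact absurd hvals (by decide)
        · exact absurd h40 (by decide)
    -- dominator extraction for tree vertices
    have hdomT : ∀ x : V, x ∉ R → x ≠ v → ∃ y ∈ R, G.Adj y x := by
      intro x hx hxv
      obtain ⟨w, hwS, hadj⟩ := hS'.1 (Sum.inl x) hx
      rcases w with y | j
      · exact ⟨y, hwS, hadj⟩
      · exact absurd hadj.1 hxv
    -- partner analysis for tree vertices
    have hpartT : ∀ x, x ∈ R →
        (∃ y ∈ R, y ≠ x ∧ WithinTwo G y x) ∨ x = v ∨
          (x = a ∧ Sum.inr (0:Fin 5) ∈ S') := by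
      intro x hx
      obtain ⟨w, hwS, hwne, hwt⟩ := hS'.2 (Sum.inl x) hx
      rcases w with y | j
      · have hyx : y ≠ x := fun h => hwne (by rw [h])
        exact Or.inl ⟨y, hwS, hyx, withinTwo_inl_inl_ne hyx hwt⟩
      · rcases withinTwo_inr_inl hwt with ⟨hj0, hxv | hvx⟩ | ⟨hxv, -⟩
        · exact Or.inr (Or.inl hxv)
        · refine Or.inr (Or.inr ⟨hadj_va x hvx, ?_⟩)
          rw [hj0] at hwS
          exact hwS
        · exact Or.inr (Or.inl hxv)
    have hb := prop5 (fun i => Sum.inr i ∈ S') c4 c3p c4p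
    rw [hcardS]
    rcases hb with ⟨i, j, k, hij, hik, hjk, hqi, hqj, hqk⟩ | ⟨h0, i, j, hij, hqi, hqj⟩
    · -- at least three path vertices in S' : find S with S.ncard ≤ R.ncard + 1
      have hQ3 : 3 ≤ Q.ncard := by
        have hsub : ({i, j, k} : Set (Fin 5)) ⊆ Q := by
          rintro z (rfl | rfl | rfl)
          · exact hqi
          · exact hqj
          · exact hqk
        have h3 : ({i, j, k} : Set (Fin 5)).ncard = 3 := by
          rw [Set.ncard_insert_of_notMem (by simp [hij, hik]),
            Set.ncard_pair hjk]
        calc (3:ℕ) = ({i, j, k} : Set (Fin 5)).ncard := h3.symm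
          _ ≤ Q.ncard := Set.ncard_le_ncard hsub (Set.toFinite _)
      have hexists : ∃ S : Set V, IsSemitotalDominatingSet G S ∧ S.ncard ≤ R.ncard + 1 := by
        by_cases haS : a ∈ R
        · refine ⟨insert v R, ⟨?_, ?_⟩, Set.ncard_insert_le _ _⟩
          · intro x hx
            have hxv : x ≠ v := fun h => hx (h ▸ Set.mem_insert _ _)
            have hxR : x ∉ R := fun h => hx (Set.mem_insert_of_mem _ h)
            obtain ⟨y, hyR, hyx⟩ := hdomT x hxR hxv
            exact ⟨y, Set.mem_insert_of_mem _ hyR, hyx⟩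
          · intro x hxS
            rcases Set.mem_insert_iff.1 hxS with rfl | hxR
            · exact ⟨a, Set.mem_insert_of_mem _ haS, hav_ne, Or.inl hva.symm⟩
            · rcases hpartT x hxR with ⟨y, hyR, hyx, hyt⟩ | rfl | ⟨rfl, -⟩
              · exact ⟨y, Set.mem_insert_of_mem _ hyR, hyx, hyt⟩
              · exact ⟨a, Set.mem_insert_of_mem _ haS, hav_ne, Or.inl hva.symm⟩
              · exact ⟨v, Set.mem_insert _ _, hva.ne, Or.inl hva⟩
        · by_cases hvS : v ∈ R
          · refine ⟨insert a R, ⟨?_, ?_⟩, Set.ncard_insert_le _ _⟩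
            · intro x hx
              have hxv : x ≠ v := fun h => hx (h ▸ Set.mem_insert_of_mem _ hvS)
              have hxR : x ∉ R := fun h => hx (Set.mem_insert_of_mem _ h)
              obtain ⟨y, hyR, hyx⟩ := hdomT x hxR hxv
              exact ⟨y, Set.mem_insert_of_mem _ hyR, hyx⟩
            · intro x hxS
              rcases Set.mem_insert_iff.1 hxS with rfl | hxR
              · exact ⟨v, Set.mem_insert_of_mem _ hvS, hav_ne.symm, Or.inl hva⟩
              · rcases hpartT x hxR with ⟨y, hyR, hyx, hyt⟩ | rfl | ⟨rfl, -⟩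
                · exact ⟨y, Set.mem_insert_of_mem _ hyR, hyx, hyt⟩
                · exact ⟨a, Set.mem_insert _ _, hav_ne, Or.inl hva.symm⟩
                · exact absurd hxR haS
          · refine ⟨insert a R, ⟨?_, ?_⟩, Set.ncard_insert_le _ _⟩
            · intro x hx
              by_cases hxv : x = v
              · subst hxv
                exact ⟨a, Set.mem_insert _ _, hva.symm⟩
              · have hxR : x ∉ R := fun h => hx (Set.mem_insert_of_mem _ h)
                obtain ⟨y, hyR, hyx⟩ := hdomT x hxR hxv
                exact ⟨y, Set.mem_insert_of_mem _ hyR, hyx⟩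
            · intro x hxS
              rcases Set.mem_insert_iff.1 hxS with rfl | hxR
              · -- partner for a via b
                by_cases hbR : b ∈ R
                · exact ⟨b, Set.mem_insert_of_mem _ hbR, hab.ne', Or.inl hab.symm⟩
                · obtain ⟨y, hyR, hyb⟩ := hdomT b hbR hbv
                  refine ⟨y, Set.mem_insert_of_mem _ hyR, fun h => haS (h ▸ hyR), ?_⟩
                  exact Or.inr ⟨b, hyb, hab.symm⟩
              · rcases hpartT x hxR with ⟨y, hyR, hyx, hyt⟩ | rfl | ⟨rfl, -⟩
                · exact ⟨y, Set.mem_insert_of_mem _ hyR, hyx, hyt⟩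
                · exact absurd hxR hvS
                · exact absurd hxR haS
      obtain ⟨S, hSDS, hScard⟩ := hexists
      have := hG.lower S hSDS
      omega
    · -- exactly the pair case : inr 0 ∉ S', two path vertices in S'
      have h0' : Sum.inr (0:Fin 5) ∉ S' := h0
      have hQ2 : 2 ≤ Q.ncard := by
        have hsub : ({i, j} : Set (Fin 5)) ⊆ Q := by
          rintro z (rfl | rfl)
          · exact hqi
          · exact hqj
        calc (2:ℕ) = ({i, j} : Set (Fin 5)).ncard := (Set.ncard_pair hij).symm
          _ ≤ Q.ncard := Set.ncard_le_ncard hsub (Set.toFinite _)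
      have hexists : ∃ S : Set V, IsSemitotalDominatingSet G S ∧ S.ncard ≤ R.ncard := by
        have hdom0 : ∀ x, x ∉ R → ∃ y ∈ R, G.Adj y x := by
          intro x hx
          obtain ⟨w, hwS, hadj⟩ := hS'.1 (Sum.inl x) hx
          rcases w with y | jj
          · exact ⟨y, hwS, hadj⟩
          · rw [hadj.2] at hwS
            exact absurd hwS h0'
        by_cases hvS : v ∈ R
        · by_cases hvp : ∃ y ∈ R, y ≠ v ∧ WithinTwo G y v
          · refine ⟨R, ⟨?_, ?_⟩, le_refl _⟩
            · exact hdom0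
            · intro x hxR
              rcases hpartT x hxR with ⟨y, hyR, hyx, hyt⟩ | rfl | ⟨rfl, h0''⟩
              · exact ⟨y, hyR, hyx, hyt⟩
              · exact hvp
              · exact absurd h0'' h0'
          · -- v has no partner in R : swap v for a
            have haR : a ∉ R := by
              intro h
              exact hvp ⟨a, h, hav_ne, Or.inl hva.symm⟩
            refine ⟨insert a (R \ {v}), ⟨?_, ?_⟩, ?_⟩
            · intro x hx
              by_cases hxv : x = v
              · subst hxv
                exact ⟨a, Set.mem_insert _ _, hva.symm⟩
              · have hxR : x ∉ R := by
                  intro h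
                  exact hx (Set.mem_insert_of_mem _ ⟨h, hxv⟩)
                obtain ⟨y, hyR, hyx⟩ := hdom0 x hxR
                have hyv : y ≠ v := by
                  rintro rfl
                  have : x = a := hadj_va x hyx
                  exact hx (this ▸ Set.mem_insert _ _)
                exact ⟨y, Set.mem_insert_of_mem _ ⟨hyR, hyv⟩, hyx⟩
            · intro x hxS
              rcases Set.mem_insert_iff.1 hxS with hxa | hxR
              · rw [hxa]
                by_cases hbR : b ∈ R
                · exact ⟨b, Set.mem_insert_of_mem _ ⟨hbR, hbv⟩, hab.ne', Or.inl hab.symm⟩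
                · obtain ⟨y, hyR, hyb⟩ := hdom0 b hbR
                  have hyv : y ≠ v := by
                    rintro rfl
                    have : b = a := hadj_va b hyb
                    exact hab.ne' this
                  refine ⟨y, Set.mem_insert_of_mem _ ⟨hyR, hyv⟩, fun h => haR (h ▸ hyR), ?_⟩
                  exact Or.inr ⟨b, hyb, hab.symm⟩
              · rcases hpartT x hxR.1 with ⟨y, hyR, hyx, hyt⟩ | rfl | ⟨rfl, h0''⟩
                · have hyv : y ≠ v := by
                    rintro rfl
                    exact hvp ⟨x, hxR.1, hxR.2, withinTwo_symm hyt⟩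
                  exact ⟨y, Set.mem_insert_of_mem _ ⟨hyR, hyv⟩, hyx, hyt⟩
                · exact absurd rfl hxR.2
                · exact absurd h0'' h0'
            · calc (insert a (R \ {v})).ncard ≤ (R \ {v}).ncard + 1 :=
                  Set.ncard_insert_le _ _
                _ = R.ncard := Set.ncard_diff_singleton_add_one hvS
        · refine ⟨R, ⟨?_, ?_⟩, le_refl _⟩
          · exact hdom0
          · intro x hxR
            rcases hpartT x hxR with ⟨y, hyR, hyx, hyt⟩ | rfl | ⟨rfl, h0''⟩
            · exact ⟨y, hyR, hyx, hyt⟩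
            · exact absurd hxR hvS
            · exact absurd h0'' h0'
      obtain ⟨S, hSDS, hScard⟩ := hexists
      have := hG.lower S hSDS
      omega

end Aux


theorem good_of_tFamily : ∀ {V : Type} {G : SimpleGraph V} {f : V → Label},
    TFamily G f → Good G f := by
  intro V G f h
  induction h with
  | base => exact Aux.good_base
  | op1 v hv h ih => exact Aux.good_op1 v hv ih
  | op2 v hv hdeg h ih => exact Aux.good_op2 v hv hdeg ih
  | iso e h ih => exact Aux.good_iso e ih

/-- If `(T, S) ∈ 𝒯`, then `γ_t2(T) = 2(n(T) − l(T) + 2)/5` and `S_A`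
is a minimum semitotal dominating set of `T`. -/
theorem tFamily_semitotalDominationNumber_formula {V : Type} [Fintype V]
    (T : SimpleGraph V) (f : V → Label) (hT : T.IsTree) (h : TFamily T f) :
    (semitotalDominationNumber T : ℝ) =
        2 * ((Fintype.card V : ℝ) - ({v : V | IsLeaf T v}.ncard : ℝ) + 2) / 5 ∧
      IsSemitotalDominatingSet T {v : V | f v = Label.A} ∧
      {v : V | f v = Label.A}.ncard = semitotalDominationNumber T := by
  have hg : Good T f := good_of_tFamily h
  set A : Set V := {v : V | f v = Label.A} with hA
  have hSDS : IsSemitotalDominatingSet T A := by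
    constructor
    · intro x hx
      cases hfx : f x with
      | A => exact absurd hfx hx
      | B =>
        obtain ⟨a₁, a₂, hne, h1, h2, h3, h4⟩ := hg.hB x hfx
        exact ⟨a₁, h3, h1.symm⟩
      | C =>
        obtain ⟨a, h1, h2⟩ := hg.hC x hfx
        exact ⟨a, h2, h1.symm⟩
    · intro x hx
      obtain ⟨b, hxb, hbB⟩ := hg.hA x hx
      obtain ⟨a₁, a₂, hne, hb1, hb2, hA1, hA2⟩ := hg.hB b hbB
      by_cases h1 : a₁ = x
      · subst h1
        exact ⟨a₂, hA2, fun h => hne h.symm, Or.inr ⟨b, hb2.symm, hxb.symm⟩⟩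
      · exact ⟨a₁, hA1, h1, Or.inr ⟨b, hb1.symm, hxb.symm⟩⟩
  have hmem : A.ncard ∈ {n | ∃ S : Set V, IsSemitotalDominatingSet T S ∧ S.ncard = n} :=
    ⟨A, hSDS, rfl⟩
  have hγ : semitotalDominationNumber T = A.ncard := by
    refine le_antisymm (Nat.sInf_le hmem) (le_csInf ⟨_, hmem⟩ ?_)
    rintro n ⟨S, hS, rfl⟩
    exact hg.lower S hS
  have hcount := hg.count
  rw [Nat.card_eq_fintype_card] at hcount
  refine ⟨?_, hSDS, hγ.symm⟩
  rw [hγ]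
  have h1 : (5 : ℝ) * (A.ncard : ℝ) + 2 * ({v : V | IsLeaf T v}.ncard : ℝ)
      = 2 * (Fintype.card V : ℝ) + 4 := by
    exact_mod_cast congrArg (fun n : ℕ => (n : ℝ)) hcount
  field_simp
  linarith
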